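/- Let ν be a Lévy measure with tail ν̄ and let T > 0. If f is Lipschitz continuous on [0,T], then the function t ↦ ∫_0^t ν̄(t−s)(f(s) − f(0)) ds is differentiable at every t ∈ [0,T], the identity ∂_t^Φ f(t) = ∫_0^t ν̄(t−s) f′(s) ds holds for every t ∈ [0,T], and the function t ↦ ∂_t^Φ f(t) is continuous on [0,T]. -/

import Mathlib

open MeasureTheory Set
open scoped ENNReal NNReal

/-- The tail of a Lévy measure: `ν̄(s) = ν((s,∞))`. -/
noncomputable def nubar (ν : Measure ℝ) (s : ℝ) : ℝ := (ν (Set.Ioi s)).toReal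

/-- A Lévy measure on `(0,∞)`: it gives no mass to `(-∞,0]` and integrates `min(s,1)`. -/
def IsLevyMeasure (ν : Measure ℝ) : Prop :=
  ν (Set.Iic 0) = 0 ∧ ∫⁻ s in Set.Ioi (0:ℝ), ENNReal.ofReal (min s 1) ∂ν ≠ ⊤

namespace StmtAux

variable {ν : MeasureTheory.Measure ℝ}

lemma nubar_nonneg (ν : Measure ℝ) (s : ℝ) : 0 ≤ nubar ν s := ENNReal.toReal_nonneg

lemma measurable_nubar (ν : Measure ℝ) : Measurable (nubar ν) := by
  have h : Antitone (fun s => ν (Set.Ioi s)) :=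
    fun a b hab => measure_mono (Ioi_subset_Ioi hab)
  exact ENNReal.measurable_toReal.comp h.measurable

lemma levy_Ioi_lt_top (hν : IsLevyMeasure ν) {ε : ℝ} (hε : 0 < ε) : ν (Set.Ioi ε) < ⊤ := by
  by_contra h
  push_neg at h
  have htop : ν (Set.Ioi ε) = ⊤ := top_le_iff.mp h
  have hle : ENNReal.ofReal (min ε 1) * ν (Set.Ioi ε)
      ≤ ∫⁻ s in Set.Ioi (0:ℝ), ENNReal.ofReal (min s 1) ∂ν := by
    calc ENNReal.ofReal (min ε 1) * ν (Set.Ioi ε)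
        = ∫⁻ _ in Set.Ioi ε, ENNReal.ofReal (min ε 1) ∂ν := by
          rw [setLIntegral_const, mul_comm]
      _ ≤ ∫⁻ s in Set.Ioi ε, ENNReal.ofReal (min s 1) ∂ν := by
          refine setLIntegral_mono (by fun_prop) fun s hs => ?_
          exact ENNReal.ofReal_le_ofReal (by simp only [le_min_iff, min_le_iff]; constructor <;> [left; right] <;> [exact le_of_lt hs; rfl])
      _ ≤ ∫⁻ s in Set.Ioi (0:ℝ), ENNReal.ofReal (min s 1) ∂ν := by
          exact lintegral_mono_set (Ioi_subset_Ioi hε.le)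
  rw [htop, ENNReal.mul_top (by simp [hε, lt_min_iff, ENNReal.ofReal_eq_zero, not_le, lt_min_iff])] at hle
  exact hν.2 (top_le_iff.mp hle)

lemma nubar_anti (hν : IsLevyMeasure ν) {a b : ℝ} (ha : 0 < a) (hab : a ≤ b) :
    nubar ν b ≤ nubar ν a :=
  ENNReal.toReal_mono (levy_Ioi_lt_top hν ha).ne (measure_mono (Ioi_subset_Ioi hab))

lemma levy_sigmaFinite (hν : IsLevyMeasure ν) : SigmaFinite ν := by
  refine ⟨⟨⟨fun n => Set.Iic 0 ∪ Set.Ioi (1/(n+1) : ℝ), fun _ => trivial, fun n => ?_, ?_⟩⟩⟩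
  · calc ν (Set.Iic 0 ∪ Set.Ioi (1/(n+1) : ℝ)) ≤ ν (Set.Iic 0) + ν (Set.Ioi (1/(n+1) : ℝ)) :=
        measure_union_le _ _
      _ < ⊤ := by
        rw [hν.1, zero_add]
        exact levy_Ioi_lt_top hν (by positivity)
  · rw [Set.eq_univ_iff_forall]
    intro x
    rcases le_or_gt x 0 with hx | hx
    · exact Set.mem_iUnion.2 ⟨0, Or.inl hx⟩
    · obtain ⟨n, hn⟩ := exists_nat_one_div_lt hx
      exact Set.mem_iUnion.2 ⟨n, Or.inr hn⟩

lemma nubar_integrableOn (hν : IsLevyMeasure ν) {T : ℝ} :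
    IntegrableOn (nubar ν) (Set.Ioc 0 T) := by
  haveI := levy_sigmaFinite hν
  refine ⟨(measurable_nubar ν).aestronglyMeasurable, ?_⟩
  rw [hasFiniteIntegral_def]
  have step1 : ∫⁻ s in Set.Ioc (0:ℝ) T, (‖nubar ν s‖₊ : ℝ≥0∞)
      ≤ ∫⁻ s in Set.Ioc (0:ℝ) T, ν (Set.Ioi s) := by
    refine lintegral_mono fun s => ?_
    rw [← enorm_eq_nnnorm, Real.enorm_eq_ofReal (nubar_nonneg ν s)]
    exact ENNReal.ofReal_toReal_le
  have step2 : ∫⁻ s in Set.Ioc (0:ℝ) T, ν (Set.Ioi s)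
      = ∫⁻ x, volume (Set.Iio x ∩ Set.Ioc 0 T) ∂ν := by
    have e1 : ∀ s : ℝ, ν (Set.Ioi s) = ∫⁻ x, (Set.Ioi s).indicator 1 x ∂ν := by
      intro s; rw [lintegral_indicator_one measurableSet_Ioi]
    simp_rw [e1]
    rw [lintegral_lintegral_swap]
    · congr 1
      funext x
      have e2 : (fun s => (Set.Ioi s).indicator (1 : ℝ → ℝ≥0∞) x)
          = (Set.Iio x).indicator 1 := by
        funext s
        simp only [Set.indicator_apply, Set.mem_Ioi, Set.mem_Iio, Pi.one_apply]
      rw [e2, lintegral_indicator_one measurableSet_Iio, Measure.restrict_apply measurableSet_Iio]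
    · have : (Function.uncurry fun s x => (Set.Ioi s).indicator (1 : ℝ → ℝ≥0∞) x)
          = Set.indicator {p : ℝ × ℝ | p.1 < p.2} 1 := by
        funext p
        simp only [Function.uncurry, Set.indicator_apply, Set.mem_Ioi, Set.mem_setOf_eq,
          Pi.one_apply]
      rw [this]
      exact (measurable_one.indicator (measurableSet_lt measurable_fst measurable_snd)).aemeasurable
  refine lt_of_le_of_lt (step1.trans_eq step2) ?_
  have step3 : ∀ x : ℝ, volume (Set.Iio x ∩ Set.Ioc 0 T) ≤ ENNReal.ofReal (min x T) := by
    intro x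
    calc volume (Set.Iio x ∩ Set.Ioc 0 T) ≤ volume (Set.Ioc 0 (min x T)) := by
          refine measure_mono fun s hs => ?_
          exact ⟨hs.2.1, le_min hs.1.le hs.2.2⟩
      _ = ENNReal.ofReal (min x T) := by rw [Real.volume_Ioc, sub_zero]
  have hae : ∀ᵐ x ∂ν, x ∈ Set.Ioi (0:ℝ) := by
    rw [ae_iff]
    refine measure_mono_null (fun x hx => ?_) hν.1
    simpa using hx
  calc ∫⁻ x, volume (Set.Iio x ∩ Set.Ioc 0 T) ∂ν ≤ ∫⁻ x, ENNReal.ofReal (min x T) ∂ν :=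
        lintegral_mono step3
    _ = ∫⁻ x in Set.Ioi (0:ℝ), ENNReal.ofReal (min x T) ∂ν := by
        rw [Measure.restrict_eq_self_of_ae_mem hae]
    _ ≤ ∫⁻ x in Set.Ioi (0:ℝ), ENNReal.ofReal (max 1 T) * ENNReal.ofReal (min x 1) ∂ν := by
        refine setLIntegral_mono (by fun_prop) fun x hx => ?_
        rw [← ENNReal.ofReal_mul (le_trans zero_le_one (le_max_left 1 T))]
        refine ENNReal.ofReal_le_ofReal ?_
        rcases le_or_gt x 1 with h1 | h1
        · rw [min_eq_left h1]
          calc min x T ≤ x := min_le_left _ _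
            _ = 1 * x := (one_mul x).symm
            _ ≤ max 1 T * x := by
              exact mul_le_mul_of_nonneg_right (le_max_left 1 T) (le_of_lt hx)
        · rw [min_eq_right h1.le, mul_one]
          exact le_trans (min_le_right x T) (le_max_right 1 T)
    _ = ENNReal.ofReal (max 1 T) * ∫⁻ x in Set.Ioi (0:ℝ), ENNReal.ofReal (min x 1) ∂ν :=
        lintegral_const_mul' _ _ ENNReal.ofReal_ne_top
    _ < ⊤ := ENNReal.mul_lt_top ENNReal.ofReal_lt_top (lt_top_iff_ne_top.2 hν.2)

/-- The primitive of the tail. -/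
noncomputable def NN (ν : Measure ℝ) (x : ℝ) : ℝ := ∫ u in (0:ℝ)..x, nubar ν u

lemma nubar_intervalIntegrable (hν : IsLevyMeasure ν) {T a b : ℝ}
    (ha : 0 ≤ a) (hb : 0 ≤ b) (haT : a ≤ T) (hbT : b ≤ T) :
    IntervalIntegrable (nubar ν) volume a b := by
  rw [intervalIntegrable_iff]
  refine (nubar_integrableOn hν (T := T)).mono_set ?_
  rw [Set.uIoc_eq_union]
  refine Set.union_subset (Set.Ioc_subset_Ioc ha hbT) (Set.Ioc_subset_Ioc hb haT)

lemma kern_intervalIntegrable (hν : IsLevyMeasure ν) {T a b c : ℝ}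
    (ha : 0 ≤ a) (hb : 0 ≤ b) (hbc : b ≤ c) (hac : a ≤ c) (hcT : c ≤ T) :
    IntervalIntegrable (fun s => nubar ν (c - s)) volume a b := by
  have h := (nubar_intervalIntegrable hν (T := T) (a := c - a) (b := c - b)
    (by linarith) (by linarith) (by linarith) (by linarith)).comp_sub_left c
  simpa using h

lemma NN_nonneg (hν : IsLevyMeasure ν) {T x : ℝ} (hx : 0 ≤ x) (hxT : x ≤ T) :
    0 ≤ NN ν x :=
  intervalIntegral.integral_nonneg hx fun u _ => nubar_nonneg ν u

lemma NN_mono (hν : IsLevyMeasure ν) {T a b : ℝ} (ha : 0 ≤ a) (hab : a ≤ b) (hbT : b ≤ T) :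
    NN ν a ≤ NN ν b := by
  have h1 : NN ν a + ∫ u in a..b, nubar ν u = NN ν b :=
    intervalIntegral.integral_add_adjacent_intervals
      (nubar_intervalIntegrable hν le_rfl ha (le_trans ha (le_trans hab hbT)) (le_trans hab hbT))
      (nubar_intervalIntegrable hν ha (le_trans ha hab) (le_trans hab hbT) hbT)
  have h2 : (0:ℝ) ≤ ∫ u in a..b, nubar ν u :=
    intervalIntegral.integral_nonneg hab fun u _ => nubar_nonneg ν u
  linarith

lemma NN_continuousOn (hν : IsLevyMeasure ν) {T : ℝ} (hT : 0 ≤ T) :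
    ContinuousOn (NN ν) (Set.Icc 0 T) := by
  have h := intervalIntegral.continuousOn_primitive_interval' (μ := volume)
    (nubar_intervalIntegrable hν le_rfl hT hT le_rfl (T := T))
    (by rw [Set.uIcc_of_le hT]; exact Set.left_mem_Icc.2 hT)
  rwa [Set.uIcc_of_le hT] at h

lemma integral_kern_left (ν : Measure ℝ) (a c : ℝ) :
    ∫ s in a..c, nubar ν (c - s) = NN ν (c - a) := by
  have h := intervalIntegral.integral_comp_sub_left (a := a) (b := c) (fun u => nubar ν u) c
  rw [h, sub_self]
  rfl

lemma integral_kern_right (ν : Measure ℝ) (u c : ℝ) :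
    ∫ r in u..c, nubar ν (r - u) = NN ν (c - u) := by
  have h := intervalIntegral.integral_comp_sub_right (a := u) (b := c) (fun x => nubar ν x) u
  rw [h, sub_self]
  rfl

lemma prodfun_intervalIntegrable (hν : IsLevyMeasure ν) {T : ℝ} {K : NNReal} {f' : ℝ → ℝ}
    (hf'int : IntegrableOn f' (Set.Icc 0 T))
    (hf'bdd : ∀ᵐ t ∂(volume.restrict (Set.Icc (0:ℝ) T)), |f' t| ≤ K)
    {a b c : ℝ} (ha : 0 ≤ a) (hab : a ≤ b) (hbc : b ≤ c) (hcT : c ≤ T) :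
    IntervalIntegrable (fun s => nubar ν (c - s) * f' s) volume a b := by
  rw [intervalIntegrable_iff_integrableOn_Ioc_of_le hab]
  have hsub : Set.Ioc a b ⊆ Set.Icc 0 T := fun s hs =>
    ⟨le_trans ha hs.1.le, le_trans hs.2 (le_trans hbc hcT)⟩
  have haesm : AEStronglyMeasurable f' (volume.restrict (Set.Ioc a b)) :=
    hf'int.aestronglyMeasurable.mono_measure (Measure.restrict_mono hsub le_rfl)
  have hbd : ∀ᵐ s ∂(volume.restrict (Set.Ioc a b)), |f' s| ≤ K :=
    hf'bdd.filter_mono (ae_mono (Measure.restrict_mono hsub le_rfl))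
  have hdom : IntegrableOn (fun s => nubar ν (c - s) * (K : ℝ)) (Set.Ioc a b) := by
    rw [← intervalIntegrable_iff_integrableOn_Ioc_of_le hab]
    exact (kern_intervalIntegrable hν ha (ha.trans hab) hbc (hab.trans hbc) hcT).mul_const _
  refine Integrable.mono' hdom ?_ ?_
  · exact (((measurable_nubar ν).comp (measurable_const.sub measurable_id)).aestronglyMeasurable).mul
      haesm
  · filter_upwards [hbd] with s hs
    rw [Real.norm_eq_abs, abs_mul, abs_of_nonneg (nubar_nonneg ν _)]
    exact mul_le_mul_of_nonneg_left hs (nubar_nonneg ν _)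

lemma ae_snd' {μ ρ : Measure ℝ} [SFinite μ] [SFinite ρ] {P : ℝ → Prop} (h : ∀ᵐ u ∂ρ, P u) :
    ∀ᵐ p ∂(μ.prod ρ), P p.2 :=
  MeasureTheory.Measure.quasiMeasurePreserving_snd.ae h

lemma triangle_swap {k : ℝ → ℝ → ℝ} {t : ℝ} (ht : 0 ≤ t)
    (hF : Integrable
      (fun p : ℝ × ℝ => Set.indicator {q : ℝ × ℝ | q.2 ≤ q.1} (fun q => k q.1 q.2) p)
      ((volume.restrict (Set.Ioc 0 t)).prod (volume.restrict (Set.Ioc 0 t)))) :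
    ∫ s in (0:ℝ)..t, (∫ u in (0:ℝ)..s, k s u) = ∫ u in (0:ℝ)..t, ∫ s in u..t, k s u := by
  set μ := volume.restrict (Set.Ioc (0:ℝ) t) with hμ
  set F : ℝ × ℝ → ℝ := Set.indicator {q : ℝ × ℝ | q.2 ≤ q.1} (fun q => k q.1 q.2) with hFdef
  have swap := MeasureTheory.integral_integral_swap (f := fun s u => F (s, u)) (μ := μ) (ν := μ) hF
  have hL : ∫ s in (0:ℝ)..t, (∫ u in (0:ℝ)..s, k s u) = ∫ s, ∫ u, F (s, u) ∂μ ∂μ := by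
    rw [hμ, intervalIntegral.integral_of_le ht]
    refine setIntegral_congr_fun measurableSet_Ioc fun s hs => ?_
    rw [intervalIntegral.integral_of_le hs.1.le]
    have e1 : Set.Ioc (0:ℝ) s = Set.Ioc 0 t ∩ Set.Iic s := by
      ext u
      simp only [Set.mem_Ioc, Set.mem_inter_iff, Set.mem_Iic]
      exact ⟨fun h => ⟨⟨h.1, h.2.trans hs.2⟩, h.2⟩, fun h => ⟨h.1.1, h.2⟩⟩
    have e2 : ∀ u, Set.indicator (Set.Iic s) (fun u => k s u) u = F (s, u) := by
      intro u
      simp only [hFdef, Set.indicator_apply, Set.mem_Iic, Set.mem_setOf_eq]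
    calc ∫ u in Set.Ioc (0:ℝ) s, k s u = ∫ u in Set.Ioc 0 t ∩ Set.Iic s, k s u := by rw [e1]
      _ = ∫ u in Set.Ioc (0:ℝ) t, Set.indicator (Set.Iic s) (fun u => k s u) u :=
          (setIntegral_indicator measurableSet_Iic).symm
      _ = ∫ u in Set.Ioc (0:ℝ) t, F (s, u) := by simp_rw [e2]
  have hR : ∫ u, ∫ s, F (s, u) ∂μ ∂μ = ∫ u in (0:ℝ)..t, ∫ s in u..t, k s u := by
    rw [hμ, intervalIntegral.integral_of_le ht]
    refine (setIntegral_congr_fun measurableSet_Ioc fun u hu => ?_)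
    have e2 : ∀ s, F (s, u) = Set.indicator (Set.Ici u) (fun s => k s u) s := by
      intro s
      simp only [hFdef, Set.indicator_apply, Set.mem_Ici, Set.mem_setOf_eq]
    have e1 : Set.Ioc (0:ℝ) t ∩ Set.Ici u = Set.Icc u t := by
      ext s
      simp only [Set.mem_Ioc, Set.mem_inter_iff, Set.mem_Ici, Set.mem_Icc]
      exact ⟨fun h => ⟨h.2, h.1.2⟩, fun h => ⟨⟨lt_of_lt_of_le hu.1 h.1, h.2⟩, h.1⟩⟩
    calc ∫ s, F (s, u) ∂μ
        = ∫ s in Set.Ioc (0:ℝ) t, Set.indicator (Set.Ici u) (fun s => k s u) s := by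
          rw [hμ]; simp_rw [e2]
      _ = ∫ s in Set.Ioc (0:ℝ) t ∩ Set.Ici u, k s u := setIntegral_indicator measurableSet_Ici
      _ = ∫ s in Set.Icc u t, k s u := by rw [e1]
      _ = ∫ s in Set.Ioc u t, k s u := integral_Icc_eq_integral_Ioc
      _ = ∫ s in u..t, k s u := (intervalIntegral.integral_of_le hu.2).symm
  rw [hL, swap, hR]

section WithF

variable {T : ℝ} {K : NNReal} {f' : ℝ → ℝ}

lemma F1_integrable (hν : IsLevyMeasure ν)
    (hf'int : IntegrableOn f' (Set.Icc 0 T))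
    (hf'bdd : ∀ᵐ t ∂(volume.restrict (Set.Icc (0:ℝ) T)), |f' t| ≤ K)
    {τ : ℝ} (hτ0 : 0 ≤ τ) (hτT : τ ≤ T) :
    Integrable
      (fun p : ℝ × ℝ =>
        Set.indicator {q : ℝ × ℝ | q.2 ≤ q.1} (fun q => nubar ν (τ - q.1) * f' q.2) p)
      ((volume.restrict (Set.Ioc 0 τ)).prod (volume.restrict (Set.Ioc 0 τ))) := by
  set μ := volume.restrict (Set.Ioc (0:ℝ) τ) with hμ
  haveI : SFinite μ := by rw [hμ]; infer_instance
  have hsub : Set.Ioc (0:ℝ) τ ⊆ Set.Icc 0 T := fun s hs => ⟨hs.1.le, hs.2.trans hτT⟩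
  have haesm : AEStronglyMeasurable f' μ :=
    hf'int.aestronglyMeasurable.mono_measure (Measure.restrict_mono hsub le_rfl)
  have hbd : ∀ᵐ s ∂μ, |f' s| ≤ K :=
    hf'bdd.filter_mono (ae_mono (Measure.restrict_mono hsub le_rfl))
  have hdom : Integrable (fun p : ℝ × ℝ => nubar ν (τ - p.1) * (K : ℝ)) (μ.prod μ) := by
    have h1 : Integrable (fun s => nubar ν (τ - s)) μ := by
      rw [hμ]
      exact (intervalIntegrable_iff_integrableOn_Ioc_of_le hτ0).mp
        (kern_intervalIntegrable hν le_rfl hτ0 le_rfl hτ0 hτT)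
    exact Integrable.mul_prod (L := ℝ) (f := fun s => nubar ν (τ - s)) (g := fun _ => (K:ℝ))
      (μ := μ) (ν := μ) h1 (integrable_const _)
  refine Integrable.mono' hdom ?_ ?_
  · exact ((((measurable_nubar ν).comp (measurable_const.sub measurable_fst)).aestronglyMeasurable).mul
      haesm.comp_snd).indicator (measurableSet_le measurable_snd measurable_fst)
  · filter_upwards [ae_snd' (μ := μ) hbd] with p hp
    refine le_trans (norm_indicator_le_norm_self _ _) ?_
    rw [Real.norm_eq_abs, abs_mul, abs_of_nonneg (nubar_nonneg ν _)]
    exact mul_le_mul_of_nonneg_left hp (nubar_nonneg ν _)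

lemma F2_integrable (hν : IsLevyMeasure ν)
    (hf'int : IntegrableOn f' (Set.Icc 0 T))
    (hf'bdd : ∀ᵐ t ∂(volume.restrict (Set.Icc (0:ℝ) T)), |f' t| ≤ K)
    {τ : ℝ} (hτ0 : 0 ≤ τ) (hτT : τ ≤ T) :
    Integrable
      (fun p : ℝ × ℝ =>
        Set.indicator {q : ℝ × ℝ | q.2 ≤ q.1} (fun q => nubar ν (q.1 - q.2) * f' q.2) p)
      ((volume.restrict (Set.Ioc 0 τ)).prod (volume.restrict (Set.Ioc 0 τ))) := by
  set μ := volume.restrict (Set.Ioc (0:ℝ) τ) with hμ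
  haveI : SFinite μ := by rw [hμ]; infer_instance
  have hsub : Set.Ioc (0:ℝ) τ ⊆ Set.Icc 0 T := fun s hs => ⟨hs.1.le, hs.2.trans hτT⟩
  have haesm : AEStronglyMeasurable f' μ :=
    hf'int.aestronglyMeasurable.mono_measure (Measure.restrict_mono hsub le_rfl)
  have hmeasF : AEStronglyMeasurable
      (fun p : ℝ × ℝ =>
        Set.indicator {q : ℝ × ℝ | q.2 ≤ q.1} (fun q => nubar ν (q.1 - q.2) * f' q.2) p)
      (μ.prod μ) :=
    ((((measurable_nubar ν).comp (measurable_fst.sub measurable_snd)).aestronglyMeasurable).mul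
      haesm.comp_snd).indicator (measurableSet_le measurable_snd measurable_fst)
  have hIicInter : ∀ r ∈ Set.Ioc (0:ℝ) τ, Set.Iic r ∩ Set.Ioc (0:ℝ) τ = Set.Ioc 0 r := by
    intro r hr
    ext u
    simp only [Set.mem_inter_iff, Set.mem_Iic, Set.mem_Ioc]
    exact ⟨fun h => ⟨h.2.1, h.1⟩, fun h => ⟨h.2, h.1, h.2.trans hr.2⟩⟩
  have hsliceK : ∀ r ∈ Set.Ioc (0:ℝ) τ,
      IntegrableOn (fun u => nubar ν (r - u) * f' u) (Set.Iic r) μ := by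
    intro r hr
    unfold IntegrableOn
    rw [hμ, Measure.restrict_restrict measurableSet_Iic, hIicInter r hr]
    exact (intervalIntegrable_iff_integrableOn_Ioc_of_le hr.1.le).mp
      (prodfun_intervalIntegrable hν hf'int hf'bdd le_rfl hr.1.le le_rfl (hr.2.trans hτT))
  have hslice : ∀ r ∈ Set.Ioc (0:ℝ) τ,
      Integrable (fun u =>
        Set.indicator {q : ℝ × ℝ | q.2 ≤ q.1} (fun q => nubar ν (q.1 - q.2) * f' q.2) (r, u)) μ := by
    intro r hr
    have e : (fun u =>
        Set.indicator {q : ℝ × ℝ | q.2 ≤ q.1} (fun q => nubar ν (q.1 - q.2) * f' q.2) (r, u))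
        = Set.indicator (Set.Iic r) (fun u => nubar ν (r - u) * f' u) := by
      funext u
      simp only [Set.indicator_apply, Set.mem_setOf_eq, Set.mem_Iic]
    rw [e]
    exact (hsliceK r hr).integrable_indicator measurableSet_Iic
  rw [integrable_prod_iff hmeasF]
  constructor
  · exact (ae_restrict_mem measurableSet_Ioc).mono fun r hr => hslice r hr
  · refine Integrable.mono' (integrable_const ((NN ν τ) * (K : ℝ)))
      hmeasF.norm.integral_prod_right' ?_
    refine (ae_restrict_mem measurableSet_Ioc).mono fun r hr => ?_
    have hbdμ : ∀ᵐ s ∂μ, |f' s| ≤ K :=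
      hf'bdd.filter_mono (ae_mono (Measure.restrict_mono hsub le_rfl))
    have hdomInt : Integrable
        (Set.indicator (Set.Iic r) (fun u => nubar ν (r - u) * (K : ℝ))) μ := by
      refine IntegrableOn.integrable_indicator ?_ measurableSet_Iic
      unfold IntegrableOn
      rw [hμ, Measure.restrict_restrict measurableSet_Iic, hIicInter r hr]
      exact (intervalIntegrable_iff_integrableOn_Ioc_of_le hr.1.le).mp
        ((kern_intervalIntegrable hν le_rfl hr.1.le le_rfl hr.1.le
          (hr.2.trans hτT)).mul_const _)
    have h1 : ∫ u, ‖Set.indicator {q : ℝ × ℝ | q.2 ≤ q.1}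
          (fun q => nubar ν (q.1 - q.2) * f' q.2) (r, u)‖ ∂μ
        ≤ ∫ u, Set.indicator (Set.Iic r) (fun u => nubar ν (r - u) * (K : ℝ)) u ∂μ := by
      refine integral_mono_ae ((hslice r hr).norm) hdomInt ?_
      filter_upwards [hbdμ] with u hu
      by_cases hur : u ≤ r
      · have e1 : (r, u) ∈ {q : ℝ × ℝ | q.2 ≤ q.1} := hur
        rw [Set.indicator_of_mem e1, Set.indicator_of_mem (Set.mem_Iic.2 hur)]
        rw [Real.norm_eq_abs, abs_mul, abs_of_nonneg (nubar_nonneg ν _)]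
        exact mul_le_mul_of_nonneg_left hu (nubar_nonneg ν _)
      · have e1 : (r, u) ∉ {q : ℝ × ℝ | q.2 ≤ q.1} := hur
        rw [Set.indicator_of_notMem e1]
        simp [Set.indicator_of_notMem (show u ∉ Set.Iic r from hur)]
    have h2 : ∫ u, Set.indicator (Set.Iic r) (fun u => nubar ν (r - u) * (K : ℝ)) u ∂μ
        = NN ν r * (K : ℝ) := by
      rw [integral_indicator measurableSet_Iic]
      rw [hμ, Measure.restrict_restrict measurableSet_Iic, hIicInter r hr]
      rw [← intervalIntegral.integral_of_le hr.1.le, intervalIntegral.integral_mul_const,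
        integral_kern_left, sub_zero]
    have h3 : NN ν r ≤ NN ν τ := NN_mono hν hr.1.le hr.2 hτT
    rw [Real.norm_eq_abs, abs_of_nonneg (integral_nonneg (fun u => norm_nonneg _))]
    calc ∫ u, ‖_‖ ∂μ ≤ NN ν r * (K : ℝ) := le_of_le_of_eq h1 h2
      _ ≤ NN ν τ * (K : ℝ) := mul_le_mul_of_nonneg_right h3 (K.coe_nonneg)
  
lemma fub1 (hν : IsLevyMeasure ν)
    (hf'int : IntegrableOn f' (Set.Icc 0 T))
    (hf'bdd : ∀ᵐ t ∂(volume.restrict (Set.Icc (0:ℝ) T)), |f' t| ≤ K)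
    {f : ℝ → ℝ} (hfAC : ∀ t ∈ Set.Icc (0:ℝ) T, f t = f 0 + ∫ s in (0:ℝ)..t, f' s)
    {τ : ℝ} (hτ0 : 0 ≤ τ) (hτT : τ ≤ T) :
    ∫ s in (0:ℝ)..τ, nubar ν (τ - s) * (f s - f 0)
      = ∫ u in (0:ℝ)..τ, NN ν (τ - u) * f' u := by
  have e : ∫ s in (0:ℝ)..τ, nubar ν (τ - s) * (f s - f 0)
      = ∫ s in (0:ℝ)..τ, (∫ u in (0:ℝ)..s, nubar ν (τ - s) * f' u) := by
    rw [intervalIntegral.integral_of_le hτ0, intervalIntegral.integral_of_le hτ0]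
    refine setIntegral_congr_fun measurableSet_Ioc fun s hs => ?_
    have hfs : f s - f 0 = ∫ u in (0:ℝ)..s, f' u := by
      rw [hfAC s ⟨hs.1.le, hs.2.trans hτT⟩]; ring
    rw [hfs, ← intervalIntegral.integral_const_mul]
  rw [e, triangle_swap hτ0 (F1_integrable hν hf'int hf'bdd hτ0 hτT)]
  rw [intervalIntegral.integral_of_le hτ0, intervalIntegral.integral_of_le hτ0]
  refine setIntegral_congr_fun measurableSet_Ioc fun u hu => ?_
  rw [intervalIntegral.integral_mul_const, integral_kern_left]

lemma fub2 (hν : IsLevyMeasure ν)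
    (hf'int : IntegrableOn f' (Set.Icc 0 T))
    (hf'bdd : ∀ᵐ t ∂(volume.restrict (Set.Icc (0:ℝ) T)), |f' t| ≤ K)
    {τ : ℝ} (hτ0 : 0 ≤ τ) (hτT : τ ≤ T) :
    ∫ r in (0:ℝ)..τ, (∫ u in (0:ℝ)..r, nubar ν (r - u) * f' u)
      = ∫ u in (0:ℝ)..τ, NN ν (τ - u) * f' u := by
  rw [triangle_swap hτ0 (F2_integrable hν hf'int hf'bdd hτ0 hτT)]
  rw [intervalIntegral.integral_of_le hτ0, intervalIntegral.integral_of_le hτ0]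
  refine setIntegral_congr_fun measurableSet_Ioc fun u hu => ?_
  have e : (fun r => nubar ν (r - u) * f' u) = fun r => (fun r => nubar ν (r - u)) r * f' u :=
    rfl
  rw [intervalIntegral.integral_mul_const, integral_kern_right]

lemma h_estimate (hν : IsLevyMeasure ν)
    (hf'int : IntegrableOn f' (Set.Icc 0 T))
    (hf'bdd : ∀ᵐ t ∂(volume.restrict (Set.Icc (0:ℝ) T)), |f' t| ≤ K)
    {t t' : ℝ} (ht0 : 0 ≤ t) (htt' : t ≤ t') (ht'T : t' ≤ T) :
    |(∫ s in (0:ℝ)..t', nubar ν (t' - s) * f' s) - ∫ s in (0:ℝ)..t, nubar ν (t - s) * f' s|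
      ≤ 2 * (K:ℝ) * NN ν (t' - t) := by
  have htT : t ≤ T := htt'.trans ht'T
  have i1 : IntervalIntegrable (fun s => nubar ν (t' - s) * f' s) volume 0 t :=
    prodfun_intervalIntegrable hν hf'int hf'bdd le_rfl ht0 htt' ht'T
  have i2 : IntervalIntegrable (fun s => nubar ν (t' - s) * f' s) volume t t' :=
    prodfun_intervalIntegrable hν hf'int hf'bdd ht0 htt' le_rfl ht'T
  have i3 : IntervalIntegrable (fun s => nubar ν (t - s) * f' s) volume 0 t :=
    prodfun_intervalIntegrable hν hf'int hf'bdd le_rfl ht0 le_rfl htT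
  have hsplit : ∫ s in (0:ℝ)..t', nubar ν (t' - s) * f' s
      = (∫ s in (0:ℝ)..t, nubar ν (t' - s) * f' s) + ∫ s in t..t', nubar ν (t' - s) * f' s :=
    (intervalIntegral.integral_add_adjacent_intervals i1 i2).symm
  -- kernels as interval integrable functions
  have k1 : IntervalIntegrable (fun s => nubar ν (t - s)) volume 0 t :=
    kern_intervalIntegrable hν le_rfl ht0 le_rfl ht0 htT
  have k2 : IntervalIntegrable (fun s => nubar ν (t' - s)) volume 0 t :=
    kern_intervalIntegrable hν le_rfl ht0 htt' (ht0.trans htt') ht'T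
  -- second term bound
  have hd2 : |∫ s in t..t', nubar ν (t' - s) * f' s| ≤ (K:ℝ) * NN ν (t' - t) := by
    rw [intervalIntegral.integral_of_le htt']
    have hg : IntegrableOn (fun s => nubar ν (t' - s) * (K:ℝ)) (Set.Ioc t t') := by
      exact (intervalIntegrable_iff_integrableOn_Ioc_of_le htt').mp
        ((kern_intervalIntegrable hν ht0 (ht0.trans htt') le_rfl htt' ht'T).mul_const _)
    have hsub2 : Set.Ioc t t' ⊆ Set.Icc 0 T := fun s hs =>
      ⟨ht0.trans hs.1.le, hs.2.trans ht'T⟩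
    have hbd : ∀ᵐ s ∂(volume.restrict (Set.Ioc t t')), |f' s| ≤ K :=
      hf'bdd.filter_mono (ae_mono (Measure.restrict_mono hsub2 le_rfl))
    have h1 : ‖∫ s in Set.Ioc t t', nubar ν (t' - s) * f' s‖
        ≤ ∫ s in Set.Ioc t t', nubar ν (t' - s) * (K:ℝ) := by
      refine norm_integral_le_of_norm_le hg ?_
      filter_upwards [hbd] with s hs
      rw [Real.norm_eq_abs, abs_mul, abs_of_nonneg (nubar_nonneg ν _)]
      exact mul_le_mul_of_nonneg_left hs (nubar_nonneg ν _)
    rw [Real.norm_eq_abs] at h1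
    refine h1.trans (le_of_eq ?_)
    rw [← intervalIntegral.integral_of_le htt', intervalIntegral.integral_mul_const,
      integral_kern_left, mul_comm]
  -- first term bound
  have hd1 : |(∫ s in (0:ℝ)..t, nubar ν (t' - s) * f' s)
        - ∫ s in (0:ℝ)..t, nubar ν (t - s) * f' s|
      ≤ (K:ℝ) * NN ν (t' - t) := by
    have hdiffint : ∫ s in (0:ℝ)..t, (nubar ν (t' - s) * f' s - nubar ν (t - s) * f' s)
        = (∫ s in (0:ℝ)..t, nubar ν (t' - s) * f' s)
          - ∫ s in (0:ℝ)..t, nubar ν (t - s) * f' s :=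
      intervalIntegral.integral_sub i1 i3
    rw [← hdiffint, intervalIntegral.integral_of_le ht0]
    have hg : IntegrableOn (fun s => (nubar ν (t - s) - nubar ν (t' - s)) * (K:ℝ))
        (Set.Ioc 0 t) := by
      exact (intervalIntegrable_iff_integrableOn_Ioc_of_le ht0).mp ((k1.sub k2).mul_const _)
    have hsub1 : Set.Ioc (0:ℝ) t ⊆ Set.Icc 0 T := fun s hs => ⟨hs.1.le, hs.2.trans htT⟩
    have hbd : ∀ᵐ s ∂(volume.restrict (Set.Ioc 0 t)), |f' s| ≤ K :=
      hf'bdd.filter_mono (ae_mono (Measure.restrict_mono hsub1 le_rfl))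
    have hne : ∀ᵐ s ∂(volume.restrict (Set.Ioc (0:ℝ) t)), s ≠ t := by
      refine ae_restrict_of_ae ?_
      rw [ae_iff]
      simp only [ne_eq, not_not, Set.setOf_eq_eq_singleton]
      exact measure_singleton t
    have h1 : ‖∫ s in Set.Ioc (0:ℝ) t, (nubar ν (t' - s) * f' s - nubar ν (t - s) * f' s)‖
        ≤ ∫ s in Set.Ioc (0:ℝ) t, (nubar ν (t - s) - nubar ν (t' - s)) * (K:ℝ) := by
      refine norm_integral_le_of_norm_le hg ?_
      filter_upwards [hbd, hne, ae_restrict_mem measurableSet_Ioc] with s hs hsne hsmem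
      have hslt : s < t := lt_of_le_of_ne hsmem.2 hsne
      have hmono : nubar ν (t' - s) ≤ nubar ν (t - s) :=
        nubar_anti hν (by linarith) (by linarith)
      rw [Real.norm_eq_abs, ← sub_mul, abs_mul, abs_sub_comm,
        abs_of_nonneg (sub_nonneg.2 hmono)]
      exact mul_le_mul_of_nonneg_left hs (sub_nonneg.2 hmono)
    rw [Real.norm_eq_abs] at h1
    refine h1.trans ?_
    have e1 : ∫ s in Set.Ioc (0:ℝ) t, (nubar ν (t - s) - nubar ν (t' - s)) * (K:ℝ)
        = (NN ν t - (NN ν t' - NN ν (t' - t))) * (K:ℝ) := by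
      rw [← intervalIntegral.integral_of_le ht0, intervalIntegral.integral_mul_const,
        intervalIntegral.integral_sub k1 k2, integral_kern_left, sub_zero]
      congr 2
      -- ∫ s in 0..t, nubar ν (t' - s) = NN ν t' - NN ν (t' - t)
      have h2 := intervalIntegral.integral_comp_sub_left (a := (0:ℝ)) (b := t)
        (fun u => nubar ν u) t'
      rw [sub_zero] at h2
      have h3 : NN ν (t' - t) + ∫ x in (t' - t)..t', nubar ν x = NN ν t' :=
        intervalIntegral.integral_add_adjacent_intervals
          (nubar_intervalIntegrable hν (T := T) le_rfl (by linarith) (by linarith) (by linarith))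
          (nubar_intervalIntegrable hν (by linarith) (ht0.trans htt') (by linarith) ht'T)
      rw [h2]
      linarith
    rw [e1]
    have hNle : NN ν t ≤ NN ν t' := NN_mono hν ht0 htt' ht'T
    have hNN : (NN ν t - (NN ν t' - NN ν (t' - t))) ≤ NN ν (t' - t) := by linarith
    calc (NN ν t - (NN ν t' - NN ν (t' - t))) * (K:ℝ) ≤ NN ν (t' - t) * (K:ℝ) :=
          mul_le_mul_of_nonneg_right hNN K.coe_nonneg
      _ = (K:ℝ) * NN ν (t' - t) := mul_comm _ _
  calc |(∫ s in (0:ℝ)..t', nubar ν (t' - s) * f' s) - ∫ s in (0:ℝ)..t, nubar ν (t - s) * f' s|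
      = |((∫ s in (0:ℝ)..t, nubar ν (t' - s) * f' s)
          - ∫ s in (0:ℝ)..t, nubar ν (t - s) * f' s)
        + ∫ s in t..t', nubar ν (t' - s) * f' s| := by rw [hsplit]; congr 1; ring
    _ ≤ |(∫ s in (0:ℝ)..t, nubar ν (t' - s) * f' s)
          - ∫ s in (0:ℝ)..t, nubar ν (t - s) * f' s|
        + |∫ s in t..t', nubar ν (t' - s) * f' s| := abs_add_le _ _
    _ ≤ (K:ℝ) * NN ν (t' - t) + (K:ℝ) * NN ν (t' - t) := add_le_add hd1 hd2
    _ = 2 * (K:ℝ) * NN ν (t' - t) := by ring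

lemma h_continuousOn (hν : IsLevyMeasure ν)
    (hf'int : IntegrableOn f' (Set.Icc 0 T))
    (hf'bdd : ∀ᵐ t ∂(volume.restrict (Set.Icc (0:ℝ) T)), |f' t| ≤ K)
    (hT : 0 < T) :
    ContinuousOn (fun t => ∫ s in (0:ℝ)..t, nubar ν (t - s) * f' s) (Set.Icc 0 T) := by
  intro t ht
  rw [Metric.continuousWithinAt_iff]
  intro ε hε
  have hKpos : (0:ℝ) < 2 * (K:ℝ) + 1 := by positivity
  set ε' := ε / (2 * (K:ℝ) + 1) with hε'
  have hε'pos : 0 < ε' := by positivity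
  have hNN0 : ContinuousWithinAt (NN ν) (Set.Icc 0 T) 0 :=
    (NN_continuousOn hν hT.le) 0 (Set.left_mem_Icc.2 hT.le)
  rw [Metric.continuousWithinAt_iff] at hNN0
  obtain ⟨δ, hδpos, hδ⟩ := hNN0 ε' hε'pos
  refine ⟨δ, hδpos, fun t' ht' hdist => ?_⟩
  have main : ∀ a b : ℝ, 0 ≤ a → a ≤ b → b ≤ T → |b - a| < δ →
      |(∫ s in (0:ℝ)..b, nubar ν (b - s) * f' s) - ∫ s in (0:ℝ)..a, nubar ν (a - s) * f' s|
        < ε := by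
    intro a b ha hab hbT habδ
    have hx0 : 0 ≤ b - a := by linarith
    have hxT : b - a ≤ T := by linarith
    have hxmem : b - a ∈ Set.Icc (0:ℝ) T := ⟨hx0, hxT⟩
    have hxdist : dist (b - a) 0 < δ := by
      rw [Real.dist_eq, sub_zero, abs_of_nonneg hx0]
      rw [abs_of_nonneg hx0] at habδ
      exact habδ
    have hNps := hδ hxmem hxdist
    rw [Real.dist_eq] at hNps
    have hNN0eq : NN ν 0 = 0 := intervalIntegral.integral_same
    rw [hNN0eq, sub_zero, abs_of_nonneg (NN_nonneg hν hx0 hxT)] at hNps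
    have hest := h_estimate hν hf'int hf'bdd ha hab hbT
    calc |(∫ s in (0:ℝ)..b, nubar ν (b - s) * f' s)
          - ∫ s in (0:ℝ)..a, nubar ν (a - s) * f' s|
        ≤ 2 * (K:ℝ) * NN ν (b - a) := hest
      _ ≤ 2 * (K:ℝ) * ε' := by
          refine mul_le_mul_of_nonneg_left hNps.le (by positivity)
      _ < (2 * (K:ℝ) + 1) * ε' := by nlinarith
      _ = ε := by
          rw [hε', mul_div_cancel₀ _ (ne_of_gt hKpos)]
  rcases le_total t t' with hle | hle
  · rw [Real.dist_eq] at hdist ⊢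
    exact main t t' ht.1 hle ht'.2 hdist
  · rw [Real.dist_eq] at hdist ⊢
    rw [abs_sub_comm]
    exact main t' t ht'.1 hle ht.2 (by rwa [abs_sub_comm] at hdist)

end WithF

end StmtAux

/-- for `f` Lipschitz on `[0,T]` (with a.e. derivative `f'`, essentially
bounded), the function `g(t) = ∫_0^t ν̄(t-s)(f(s)-f(0)) ds` is differentiable at every
`t ∈ [0,T]` (in the sense of derivatives within `[0,T]`), with
`∂ₜ^Φ f (t) = ∫_0^t ν̄(t-s) f'(s) ds` for every `t ∈ [0,T]`, and
`t ↦ ∂ₜ^Φ f (t)` is continuous on `[0,T]`. -/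
theorem stmt_1 (ν : Measure ℝ) (hν : IsLevyMeasure ν)
    (T : ℝ) (hT : 0 < T) (K : NNReal) (f f' : ℝ → ℝ)
    (hLip : LipschitzOnWith K f (Set.Icc 0 T))
    (hf'int : MeasureTheory.IntegrableOn f' (Set.Icc 0 T))
    (hf'bdd : ∀ᵐ t ∂(volume.restrict (Set.Icc (0:ℝ) T)), |f' t| ≤ K)
    (hfAC : ∀ t ∈ Set.Icc (0:ℝ) T, f t = f 0 + ∫ s in (0:ℝ)..t, f' s) :
    (∀ t ∈ Set.Icc (0:ℝ) T,
        HasDerivWithinAt (fun τ => ∫ s in (0:ℝ)..τ, nubar ν (τ - s) * (f s - f 0))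
          (∫ s in (0:ℝ)..t, nubar ν (t - s) * f' s) (Set.Icc 0 T) t)
      ∧ ContinuousOn (fun t => ∫ s in (0:ℝ)..t, nubar ν (t - s) * f' s)
          (Set.Icc 0 T) := by
  have hcont : ContinuousOn (fun t => ∫ s in (0:ℝ)..t, nubar ν (t - s) * f' s)
      (Set.Icc 0 T) := StmtAux.h_continuousOn hν hf'int hf'bdd hT
  refine ⟨fun t ht => ?_, hcont⟩
  haveI : Fact (t ∈ Set.Icc (0:ℝ) T) := ⟨ht⟩
  have hint : IntervalIntegrable (fun r => ∫ s in (0:ℝ)..r, nubar ν (r - s) * f' s)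
      volume 0 t := by
    apply ContinuousOn.intervalIntegrable
    refine hcont.mono ?_
    rw [Set.uIcc_of_le ht.1]
    exact Set.Icc_subset_Icc le_rfl ht.2
  have hftc := intervalIntegral.integral_hasDerivWithinAt_right (s := Set.Icc (0:ℝ) T) (t := Set.Icc (0:ℝ) T) hint
    (hcont.stronglyMeasurableAtFilter_nhdsWithin measurableSet_Icc t)
    (hcont t ht)
  refine hftc.congr (fun τ hτ => ?_) ?_
  · exact (StmtAux.fub1 hν hf'int hf'bdd hfAC hτ.1 hτ.2).trans
      (StmtAux.fub2 hν hf'int hf'bdd hτ.1 hτ.2).symm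
  · exact (StmtAux.fub1 hν hf'int hf'bdd hfAC ht.1 ht.2).trans
      (StmtAux.fub2 hν hf'int hf'bdd ht.1 ht.2).symm
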